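/- (Lower-triangular cross terms vanish) Suppose each conditional probability θ ↦ π_θ(v | y₁,…,y_{t−1}) is Fréchet differentiable at θ₀ and write π = π_{θ₀}. For all time indices t' < t in {1,…,T}: Σ_{y∈V^T} π(y) · log(π(y_{t'} | y_{1:t'−1}) / π_ref(y_{t'} | y_{1:t'−1})) · D_θ[log π_θ(y_t | y_{1:t−1})](θ₀) = 0, where π(y) = Π_{s=1}^T π(y_s | y_{1:s−1}) is the sequence probability. -/

import Mathlib

open Finset

noncomputable section

/-- Sequence probability of an autoregressive policy given by its conditionals:
`π(y) = ∏_{s=1}^T π(y_s | y_{1:s-1})`. -/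
def seqP {V : Type*} [Fintype V] {T : ℕ} (cond : List V → V → ℝ) (y : Fin T → V) : ℝ :=
  ∏ s : Fin T, cond ((List.ofFn y).take s.1) (y s)

lemma ofFn_snoc' {V : Type*} {n : ℕ} (p : Fin n → V) (v : V) :
    List.ofFn (Fin.snoc p v : Fin (n + 1) → V) = List.ofFn p ++ [v] := by
  rw [List.ofFn_succ']
  simp [List.concat_eq_append]

lemma seqP_snoc {V : Type*} [Fintype V] (cond : List V → V → ℝ) {n : ℕ}
    (p : Fin n → V) (v : V) :
    seqP cond (Fin.snoc p v) = seqP cond p * cond (List.ofFn p) v := by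
  unfold seqP
  rw [Fin.prod_univ_castSucc]
  congr 1
  · refine Finset.prod_congr rfl fun s _ => ?_
    rw [ofFn_snoc', Fin.snoc_castSucc]
    congr 1
    rw [List.take_append_of_le_length (by simp [Nat.le_of_lt s.2])]
    rfl
  · rw [ofFn_snoc', Fin.snoc_last]
    congr 1
    rw [List.take_append_of_le_length (by simp)]
    simp

lemma score_zero {V : Type*} [Fintype V]
    {Θ : Type*} [NormedAddCommGroup Θ] [NormedSpace ℝ Θ]
    (πθ : Θ → List V → V → ℝ)
    (hpos : ∀ θ p v, 0 < πθ θ p v) (hsum : ∀ θ p, ∑ v, πθ θ p v = 1)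
    (θ₀ : Θ) (hdiff : ∀ p v, DifferentiableAt ℝ (fun θ => πθ θ p v) θ₀)
    (p : List V) :
    ∑ v, πθ θ₀ p v • fderiv ℝ (fun θ => Real.log (πθ θ p v)) θ₀ = 0 := by
  have h1 : ∀ v : V, fderiv ℝ (fun θ => Real.log (πθ θ p v)) θ₀
      = (πθ θ₀ p v)⁻¹ • fderiv ℝ (fun θ => πθ θ p v) θ₀ :=
    fun v => fderiv.log (hdiff p v) (hpos θ₀ p v).ne'
  have h2 : ∀ v : V, πθ θ₀ p v * (πθ θ₀ p v)⁻¹ = 1 :=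
    fun v => mul_inv_cancel₀ (hpos θ₀ p v).ne'
  simp_rw [h1, smul_smul, h2, one_smul]
  rw [← fderiv_fun_sum (fun v _ => hdiff p v)]
  have h3 : (fun θ => ∑ v, πθ θ p v) = fun _ : Θ => (1 : ℝ) :=
    funext fun θ => hsum θ p
  rw [h3, fderiv_fun_const]
  rfl

lemma aux_vanish {V : Type*} [Fintype V]
    {Θ : Type*} [NormedAddCommGroup Θ] [NormedSpace ℝ Θ]
    (πθ : Θ → List V → V → ℝ)
    (hpos : ∀ θ p v, 0 < πθ θ p v) (hsum : ∀ θ p, ∑ v, πθ θ p v = 1)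
    (θ₀ : Θ) (hdiff : ∀ p v, DifferentiableAt ℝ (fun θ => πθ θ p v) θ₀) :
    ∀ (T t : ℕ) (ht : t < T) (C : List V → ℝ),
    ∑ y : Fin T → V, (seqP (πθ θ₀) y * C ((List.ofFn y).take t)) •
      fderiv ℝ (fun θ => Real.log (πθ θ ((List.ofFn y).take t) (y ⟨t, ht⟩))) θ₀ = 0 := by
  intro T
  induction T with
  | zero => intro t ht; omega
  | succ n IH =>
    intro t ht C
    rw [← Equiv.sum_comp (Fin.snocEquiv (fun _ : Fin (n + 1) => V)), Fintype.sum_prod_type,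
      Finset.sum_comm]
    simp only [Fin.snocEquiv_apply]
    by_cases h : t < n
    · have key : ∀ (p : Fin n → V) (v : V),
          (seqP (πθ θ₀) (Fin.snoc p v) *
            C ((List.ofFn (Fin.snoc p v : Fin (n+1) → V)).take t)) •
          fderiv ℝ (fun θ => Real.log (πθ θ
            ((List.ofFn (Fin.snoc p v : Fin (n+1) → V)).take t)
            ((Fin.snoc p v : Fin (n+1) → V) ⟨t, ht⟩))) θ₀
          = ((seqP (πθ θ₀) p * πθ θ₀ (List.ofFn p) v) * C ((List.ofFn p).take t)) •
            fderiv ℝ (fun θ => Real.log (πθ θ ((List.ofFn p).take t) (p ⟨t, h⟩))) θ₀ := by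
        intro p v
        have htk : (List.ofFn (Fin.snoc p v : Fin (n+1) → V)).take t
            = (List.ofFn p).take t := by
          rw [ofFn_snoc', List.take_append_of_le_length (by simp [Nat.le_of_lt h])]
        have hval : (Fin.snoc p v : Fin (n+1) → V) ⟨t, ht⟩ = p ⟨t, h⟩ := by
          have : (⟨t, ht⟩ : Fin (n+1)) = Fin.castSucc ⟨t, h⟩ := rfl
          rw [this, Fin.snoc_castSucc]
        rw [htk, hval, seqP_snoc]
      calc ∑ p : Fin n → V, ∑ v : V,
            (seqP (πθ θ₀) (Fin.snoc p v) *
              C ((List.ofFn (Fin.snoc p v : Fin (n+1) → V)).take t)) •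
            fderiv ℝ (fun θ => Real.log (πθ θ
              ((List.ofFn (Fin.snoc p v : Fin (n+1) → V)).take t)
              ((Fin.snoc p v : Fin (n+1) → V) ⟨t, ht⟩))) θ₀
          = ∑ p : Fin n → V,
            (seqP (πθ θ₀) p * C ((List.ofFn p).take t)) •
            fderiv ℝ (fun θ => Real.log (πθ θ ((List.ofFn p).take t) (p ⟨t, h⟩))) θ₀ := by
            refine Finset.sum_congr rfl fun p _ => ?_
            simp_rw [key p]
            rw [← Finset.sum_smul]
            congr 1
            have : ∀ v : V, seqP (πθ θ₀) p * πθ θ₀ (List.ofFn p) v *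
                C ((List.ofFn p).take t)
                = πθ θ₀ (List.ofFn p) v *
                  (seqP (πθ θ₀) p * C ((List.ofFn p).take t)) := fun v => by ring
            simp_rw [this]
            rw [← Finset.sum_mul, hsum, one_mul]
        _ = 0 := IH t h C
    · have htn : t = n := by omega
      subst htn
      refine Finset.sum_eq_zero fun p _ => ?_
      have key : ∀ v : V,
          (seqP (πθ θ₀) (Fin.snoc p v) *
            C ((List.ofFn (Fin.snoc p v : Fin (t+1) → V)).take t)) •
          fderiv ℝ (fun θ => Real.log (πθ θ
            ((List.ofFn (Fin.snoc p v : Fin (t+1) → V)).take t)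
            ((Fin.snoc p v : Fin (t+1) → V) ⟨t, ht⟩))) θ₀
          = (seqP (πθ θ₀) p * C (List.ofFn p)) •
            (πθ θ₀ (List.ofFn p) v •
              fderiv ℝ (fun θ => Real.log (πθ θ (List.ofFn p) v)) θ₀) := by
        intro v
        have htk : (List.ofFn (Fin.snoc p v : Fin (t+1) → V)).take t = List.ofFn p := by
          rw [ofFn_snoc', List.take_append_of_le_length (by simp)]
          simp
        have hval : (Fin.snoc p v : Fin (t+1) → V) ⟨t, ht⟩ = v := by
          have : (⟨t, ht⟩ : Fin (t+1)) = Fin.last t := rfl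
          rw [this, Fin.snoc_last]
        rw [htk, hval, seqP_snoc, smul_smul]
        congr 1
        ring
      exact (Finset.sum_congr rfl fun v _ => key v).trans
        (by rw [← Finset.smul_sum, score_zero πθ hpos hsum θ₀ hdiff, smul_zero])

/-- lower-triangular cross terms vanish, for `t' < t`. -/
theorem lower_triangular_cross_terms_vanish
    {V : Type*} [Fintype V] [Nonempty V] {T : ℕ} (hT : 1 ≤ T)
    {Θ : Type*} [NormedAddCommGroup Θ] [NormedSpace ℝ Θ]
    (πref : List V → V → ℝ) (href_pos : ∀ p v, 0 < πref p v)
    (href_sum : ∀ p, ∑ v, πref p v = 1)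
    (πθ : Θ → List V → V → ℝ)
    (hpos : ∀ θ p v, 0 < πθ θ p v) (hsum : ∀ θ p, ∑ v, πθ θ p v = 1)
    (θ₀ : Θ) (hdiff : ∀ p v, DifferentiableAt ℝ (fun θ => πθ θ p v) θ₀)
    (t' t : Fin T) (htt : t' < t) :
    ∑ y : Fin T → V,
      (seqP (πθ θ₀) y *
        Real.log (πθ θ₀ ((List.ofFn y).take t'.1) (y t')
          / πref ((List.ofFn y).take t'.1) (y t'))) •
        fderiv ℝ (fun θ => Real.log (πθ θ ((List.ofFn y).take t.1) (y t))) θ₀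
      = 0 := by
  classical
  set d : V := Classical.arbitrary V with hd
  have := aux_vanish πθ hpos hsum θ₀ hdiff T t.1 t.2
    (fun p => Real.log (πθ θ₀ (p.take t'.1) (p.getD t'.1 d)
      / πref (p.take t'.1) (p.getD t'.1 d)))
  rw [← this]
  refine Finset.sum_congr rfl fun y _ => ?_
  have htake : ((List.ofFn y).take t.1).take t'.1 = (List.ofFn y).take t'.1 := by
    rw [List.take_take, min_eq_left (Nat.le_of_lt htt)]
  have hlen : t'.1 < ((List.ofFn y).take t.1).length := by
    rw [List.length_take, List.length_ofFn]
    exact lt_min htt t'.2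
  have hget : ((List.ofFn y).take t.1).getD t'.1 d = y t' := by
    rw [List.getD_eq_getElem _ _ hlen]
    simp [List.getElem_take]
  rw [htake, hget]
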